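/- Let L be a complete enriched Lie algebra. Then L^{(k)} = lim_ℓ L^{(k)}/L^{(k+ℓ)}; in particular L ≅ lim_k L/L^{(k)}, and each quotient L/L^{(k)} is a nilpotent Lie algebra. -/

import Mathlib

section EnrichedPre

variable {L : Type*} [LieRing L] [LieAlgebra ℚ L]

/-- `lcsIn A n` is the span of iterated Lie brackets of length `n+1` with entries in `A`
(so `lcsIn ⊤ (k-1)` is the `k`-th term `L^k` of the lower central series). -/
def lcsIn (A : Submodule ℚ L) : ℕ → Submodule ℚ L
  | 0 => A
  | n + 1 => Submodule.span ℚ {z : L | ∃ x ∈ A, ∃ y ∈ lcsIn A n, ⁅x, y⁆ = z}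

/-- The closure of a subspace `S` in an enriched Lie algebra `(L, {I α})`:
the set of limits of coherent families of elements of `S`, i.e. of those `x`
whose image in each `L ⧸ I α` lies in the image of `S`. -/
def encl {ι : Type*} (I : ι → LieIdeal ℚ L) (S : Submodule ℚ L) : Submodule ℚ L where
  carrier := {x : L | ∀ α, ∃ s ∈ S, x - s ∈ (I α : Submodule ℚ L)}
  add_mem' := by
    intro a b ha hb α
    obtain ⟨s, hs, h1⟩ := ha α
    obtain ⟨t, ht, h2⟩ := hb α
    exact ⟨s + t, S.add_mem hs ht, by
      simpa [add_sub_add_comm] using Submodule.add_mem _ h1 h2⟩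
  zero_mem' := fun α => ⟨0, S.zero_mem, by simp⟩
  smul_mem' := by
    intro c a ha α
    obtain ⟨s, hs, h1⟩ := ha α
    exact ⟨c • s, S.smul_mem c hs, by
      simpa [smul_sub] using Submodule.smul_mem _ c h1⟩

/-- `(L, {I α})` is an enriched Lie algebra: a directed family of ideals with
finite-dimensional nilpotent quotients and trivial intersection. -/
def IsEnriched {ι : Type*} (I : ι → LieIdeal ℚ L) : Prop :=
  (∀ α β, ∃ γ, I γ ≤ I α ⊓ I β) ∧
  (∀ α, FiniteDimensional ℚ (L ⧸ I α)) ∧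
  (∀ α, LieRing.IsNilpotent (L ⧸ I α)) ∧
  (⨅ α, I α) = ⊥

/-- Completeness of `(L, {I α})`: every coherent family in `lim_α L/I α`
(presented by compatible representatives) has a limit in `L`. -/
def IsCompleteWrt {ι : Type*} (I : ι → LieIdeal ℚ L) : Prop :=
  ∀ y : ι → L, (∀ α β, I β ≤ I α → y β - y α ∈ (I α : Submodule ℚ L)) →
    ∃ x : L, ∀ α, x - y α ∈ (I α : Submodule ℚ L)

end EnrichedPre
section Aux

variable {M : Type*} [LieRing M] [LieAlgebra ℚ M]

lemma lcsIn_succ_le (n : ℕ) :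
    lcsIn (⊤ : Submodule ℚ M) (n + 1) ≤ lcsIn (⊤ : Submodule ℚ M) n := by
  induction n with
  | zero => exact le_top
  | succ n ih =>
    show lcsIn (⊤ : Submodule ℚ M) (n + 2) ≤ lcsIn (⊤ : Submodule ℚ M) (n + 1)
    rw [show lcsIn (⊤ : Submodule ℚ M) (n + 2) =
        Submodule.span ℚ {z : M | ∃ x ∈ (⊤ : Submodule ℚ M), ∃ y ∈ lcsIn (⊤ : Submodule ℚ M) (n + 1), ⁅x, y⁆ = z} from rfl]
    apply Submodule.span_le.mpr
    rintro z ⟨x, hx, y, hy, rfl⟩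
    exact Submodule.subset_span ⟨x, hx, y, ih hy, rfl⟩

lemma lcsIn_antitone : Antitone fun n => lcsIn (⊤ : Submodule ℚ M) n :=
  antitone_nat_of_succ_le lcsIn_succ_le

lemma lcsIn_le_lcs (n : ℕ) :
    lcsIn (⊤ : Submodule ℚ M) n ≤ (LieModule.lowerCentralSeries ℚ M M n : Submodule ℚ M) := by
  induction n with
  | zero => simp [lcsIn]
  | succ n ih =>
    rw [show lcsIn (⊤ : Submodule ℚ M) (n + 1) =
        Submodule.span ℚ {z : M | ∃ x ∈ (⊤ : Submodule ℚ M), ∃ y ∈ lcsIn (⊤ : Submodule ℚ M) n, ⁅x, y⁆ = z} from rfl]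
    apply Submodule.span_le.mpr
    rintro z ⟨x, -, y, hy, rfl⟩
    have : (⁅x, y⁆ : M) ∈ LieModule.lowerCentralSeries ℚ M M (n + 1) := by
      rw [LieModule.lowerCentralSeries_succ]
      exact LieSubmodule.lie_mem_lie (LieSubmodule.mem_top x) (ih hy)
    exact this

variable {Q : Type*} [LieRing Q] [LieAlgebra ℚ Q]

lemma map_lcsIn (f : M →ₗ[ℚ] Q) (hf : ∀ x y : M, f ⁅x, y⁆ = ⁅f x, f y⁆) (n : ℕ) :
    ∀ z ∈ lcsIn (⊤ : Submodule ℚ M) n, f z ∈ lcsIn (⊤ : Submodule ℚ Q) n := by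
  induction n with
  | zero => intro z _; exact Submodule.mem_top
  | succ n ih =>
    intro z hz
    have hz' : z ∈ Submodule.span ℚ
        {z : M | ∃ x ∈ (⊤ : Submodule ℚ M), ∃ y ∈ lcsIn (⊤ : Submodule ℚ M) n, ⁅x, y⁆ = z} := hz
    refine Submodule.span_induction ?_ ?_ ?_ ?_ hz'
    · rintro w ⟨x, -, y, hy, rfl⟩
      rw [hf]
      exact Submodule.subset_span ⟨f x, Submodule.mem_top, f y, ih y hy, rfl⟩
    · simp
    · intro a b _ _ ha hb; rw [map_add]; exact Submodule.add_mem _ ha hb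
    · intro c a _ ha; rw [map_smul]; exact Submodule.smul_mem _ c ha

end Aux

section Aux2

variable {L : Type*} [LieRing L] [LieAlgebra ℚ L]

lemma exists_lcsIn_le (J : LieIdeal ℚ L) (h : LieRing.IsNilpotent (L ⧸ J)) :
    ∃ n : ℕ, ∀ z ∈ lcsIn (⊤ : Submodule ℚ L) n, z ∈ (J : Submodule ℚ L) := by
  obtain ⟨n, hn⟩ := (LieModule.isNilpotent_iff ℚ (L ⧸ J) (L ⧸ J)).mp h
  refine ⟨n, fun z hz => ?_⟩
  set f : L →ₗ[ℚ] L ⧸ J := (LieSubmodule.Quotient.mk' J).toLinearMap with hf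
  have hbr : ∀ x y : L, f ⁅x, y⁆ = ⁅f x, f y⁆ := fun x y =>
    LieSubmodule.Quotient.mk_bracket J x y
  have hmem := map_lcsIn f hbr n z hz
  have h2 := lcsIn_le_lcs (M := L ⧸ J) n hmem
  rw [hn] at h2
  have h3 : f z = 0 := by simpa using h2
  have h4 : LieSubmodule.Quotient.mk' J z = 0 := h3
  rwa [LieSubmodule.Quotient.mk_eq_zero] at h4

end Aux2

/-- In a complete enriched Lie algebra, `L^{(k)} = lim_ℓ
L^{(k)}/L^{(k+ℓ)}` (coherent families in the tower converge to a unique limit in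
`L^{(k)}`); in particular (`k = 1`, i.e. index `0`) `L = lim_k L/L^{(k)}`; moreover each
`L/L^{(k)}` is nilpotent, i.e. `L^k ⊆ L^{(k)}`.  Here `encl I (lcsIn ⊤ (k-1)) = L^{(k)}`. -/
theorem stmt8 {ι L : Type*} [LieRing L] [LieAlgebra ℚ L]
    (I : ι → LieIdeal ℚ L) (hE : IsEnriched I) (hC : IsCompleteWrt I) (k : ℕ) :
    (∀ y : ℕ → L,
      (∀ l, y l ∈ encl I (lcsIn (⊤ : Submodule ℚ L) k)) →
      (∀ l m, l ≤ m → y m - y l ∈ encl I (lcsIn (⊤ : Submodule ℚ L) (k + l))) →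
      ∃ x ∈ encl I (lcsIn (⊤ : Submodule ℚ L) k),
        ∀ l, x - y l ∈ encl I (lcsIn (⊤ : Submodule ℚ L) (k + l))) ∧
    (∀ x : L, (∀ l, x ∈ encl I (lcsIn (⊤ : Submodule ℚ L) (k + l))) → x = 0) ∧
    lcsIn (⊤ : Submodule ℚ L) k ≤ encl I (lcsIn (⊤ : Submodule ℚ L) k) := by
  
  obtain ⟨-, -, hnil, hinf⟩ := hE
  choose n hn using fun α => exists_lcsIn_le (I α) (hnil α)
  refine ⟨?_, ?_, fun z hz α => ⟨z, hz, by simp⟩⟩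
  · intro y hy hco
    have key : ∀ α, ∀ l m, n α ≤ l → l ≤ m → y m - y l ∈ (I α : Submodule ℚ L) := by
      intro α l m hl hlm
      obtain ⟨s, hs, hd⟩ := hco l m hlm α
      have hsI : s ∈ (I α : Submodule ℚ L) :=
        hn α s (lcsIn_antitone (le_trans hl (Nat.le_add_left l k)) hs)
      simpa using Submodule.add_mem _ hd hsI
    have hcoh : ∀ α β, I β ≤ I α → (fun α => y (n α)) β - (fun α => y (n α)) α ∈ (I α : Submodule ℚ L) := by
      intro α β hba
      have h1 := key α (n α) (max (n α) (n β)) le_rfl (le_max_left _ _)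
      have h2 : y (max (n α) (n β)) - y (n β) ∈ (I α : Submodule ℚ L) :=
        hba (key β (n β) (max (n α) (n β)) le_rfl (le_max_right _ _))
      have h3 := Submodule.sub_mem _ h1 h2
      simpa using h3
    obtain ⟨x, hx⟩ := hC (fun α => y (n α)) hcoh
    refine ⟨x, ?_, ?_⟩
    · intro α
      obtain ⟨s, hs, hd⟩ := hy (n α) α
      refine ⟨s, hs, ?_⟩
      have := Submodule.add_mem _ (hx α) hd
      simpa using this
    · intro l α
      obtain ⟨s, hs, hd⟩ := hco l (max (n α) l) (le_max_right _ _) α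
      have h1 : x - y (n α) ∈ (I α : Submodule ℚ L) := hx α
      have h2 : y (max (n α) l) - y (n α) ∈ (I α : Submodule ℚ L) :=
        key α (n α) (max (n α) l) le_rfl (le_max_left _ _)
      refine ⟨s, hs, ?_⟩
      have h4 := Submodule.add_mem _ (Submodule.sub_mem _ h1 h2) hd
      have heq : (x - y (n α)) - (y (max (n α) l) - y (n α)) +
          (y (max (n α) l) - y l - s) = x - y l - s := by abel
      rwa [heq] at h4
  · intro x hx
    have hall : ∀ α, x ∈ I α := by
      intro α
      obtain ⟨s, hs, hd⟩ := hx (n α) α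
      have hsI : s ∈ (I α : Submodule ℚ L) :=
        hn α s (lcsIn_antitone (Nat.le_add_left (n α) k) hs)
      simpa using Submodule.add_mem _ hd hsI
    have : x ∈ (⨅ α, I α : LieIdeal ℚ L) := (LieSubmodule.mem_iInf I).mpr hall
    rw [hinf] at this
    simpa using this
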